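/- If a ∈ U(n) admits factorizations a = a₊v₊⁻¹ = a₋v₋⁻¹ with diagonal parts δ₊ = diag(a₊), δ₋ = diag(a₋), then δ₊ = (δ₋⁻¹)*, and consequently the quotients φ_j(a) = d⁺_j(a)/d⁻_{j+1}(a) of principal minors all have absolute value 1. -/

import Mathlib

open Matrix

/-- Upper principal minor `d⁺_j` (1-indexed). -/
noncomputable def dplus {n : ℕ} (a : Matrix (Fin n) (Fin n) ℂ) (j : ℕ) : ℂ :=
  (a.submatrix (fun i : {i : Fin n // (i : ℕ) < j} => (i : Fin n))
    (fun i : {i : Fin n // (i : ℕ) < j} => (i : Fin n))).det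

/-- Lower principal minor `d⁻_j` (1-indexed); `dminus a (n+1) = 1`. -/
noncomputable def dminus {n : ℕ} (a : Matrix (Fin n) (Fin n) ℂ) (j : ℕ) : ℂ :=
  (a.submatrix (fun i : {i : Fin n // j ≤ (i : ℕ) + 1} => (i : Fin n))
    (fun i : {i : Fin n // j ≤ (i : ℕ) + 1} => (i : Fin n))).det

lemma sub_mul_sub {n : ℕ} (p : Fin n → Prop) [DecidablePred p]
    (A B : Matrix (Fin n) (Fin n) ℂ)
    (hB : ∀ k i : Fin n, p i → ¬ p k → B k i = 0) :
    (A * B).submatrix (fun i : {i : Fin n // p i} => (i : Fin n))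
        (fun i : {i : Fin n // p i} => (i : Fin n)) =
      (A.submatrix (fun i : {i : Fin n // p i} => (i : Fin n))
        (fun i : {i : Fin n // p i} => (i : Fin n))) *
      (B.submatrix (fun i : {i : Fin n // p i} => (i : Fin n))
        (fun i : {i : Fin n // p i} => (i : Fin n))) := by
  ext i i'
  simp only [Matrix.submatrix_apply, Matrix.mul_apply]
  rw [← Finset.sum_subtype (Finset.univ.filter p) (fun x => by simp)
      (fun k => A (i : Fin n) k * B k (i' : Fin n))]
  refine (Finset.sum_filter_of_ne fun k _ hne => ?_).symm
  by_contra hk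
  exact hne (by rw [hB k i' i'.2 hk, mul_zero])

lemma det_sub_upper {n : ℕ} (p : Fin n → Prop) [DecidablePred p]
    (M : Matrix (Fin n) (Fin n) ℂ) (hM : ∀ i k : Fin n, k < i → M i k = 0) :
    (M.submatrix (fun i : {i : Fin n // p i} => (i : Fin n))
        (fun i : {i : Fin n // p i} => (i : Fin n))).det =
      ∏ i ∈ Finset.univ.filter p, M i i := by
  rw [Matrix.det_of_upperTriangular]
  · exact (Finset.prod_subtype (Finset.univ.filter p) (fun x => by simp)
      (fun i => M i i)).symm
  · intro i k hlt
    exact hM i k (by exact_mod_cast hlt)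

lemma det_sub_lower {n : ℕ} (p : Fin n → Prop) [DecidablePred p]
    (M : Matrix (Fin n) (Fin n) ℂ) (hM : ∀ i k : Fin n, i < k → M i k = 0) :
    (M.submatrix (fun i : {i : Fin n // p i} => (i : Fin n))
        (fun i : {i : Fin n // p i} => (i : Fin n))).det =
      ∏ i ∈ Finset.univ.filter p, M i i := by
  rw [Matrix.det_of_lowerTriangular]
  · exact (Finset.prod_subtype (Finset.univ.filter p) (fun x => by simp)
      (fun i => M i i)).symm
  · intro i k hlt
    exact hM i k (by exact_mod_cast hlt)

/-- for a unitary `a` with triangular factorizations,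
`δ₊ = (δ₋⁻¹)*`, and all quotients `φ_j(a) = d⁺_j(a)/d⁻_{j+1}(a)` of principal
minors have absolute value one. -/
theorem stmt_5 (n : ℕ) (a ap vp am vm : Matrix (Fin n) (Fin n) ℂ)
    (hunitary : aᴴ * a = 1)
    (hap : ∀ i j : Fin n, j < i → ap i j = 0) (hapdet : ap.det ≠ 0)
    (hvp : ∀ i j : Fin n, i < j → vp i j = 0) (hvp1 : ∀ i, vp i i = 1)
    (ham : ∀ i j : Fin n, i < j → am i j = 0) (hamdet : am.det ≠ 0)
    (hvm : ∀ i j : Fin n, j < i → vm i j = 0) (hvm1 : ∀ i, vm i i = 1)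
    (hfacp : a = ap * vp⁻¹) (hfacm : a = am * vm⁻¹) :
    (Matrix.diagonal fun i => ap i i) = ((Matrix.diagonal fun i => am i i)⁻¹)ᴴ ∧
    ∀ j : Fin n,
      ‖dplus a ((j : ℕ) + 1) / dminus a ((j : ℕ) + 2)‖ = 1 := by
  -- determinants of unit triangular matrices
  have hvpdet : vp.det = 1 := by
    rw [Matrix.det_of_lowerTriangular vp (fun i j h => hvp i j h)]
    simp [hvp1]
  have hvmdet : vm.det = 1 := by
    rw [Matrix.det_of_upperTriangular (fun i j h => hvm i j h)]
    simp [hvm1]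
  have hvpinv : vp⁻¹ * vp = 1 :=
    Matrix.nonsing_inv_mul vp (by rw [hvpdet]; exact isUnit_one)
  have hvminv : vm⁻¹ * vm = 1 :=
    Matrix.nonsing_inv_mul vm (by rw [hvmdet]; exact isUnit_one)
  have hapva : a * vp = ap := by
    rw [hfacp, Matrix.mul_assoc, hvpinv, Matrix.mul_one]
  have hamva : a * vm = am := by
    rw [hfacm, Matrix.mul_assoc, hvminv, Matrix.mul_one]
  -- the key relation `apᴴ * am = vpᴴ * vm`
  have hmat : apᴴ * am = vpᴴ * vm := by
    rw [← hapva, ← hamva, Matrix.conjTranspose_mul, Matrix.mul_assoc,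
      ← Matrix.mul_assoc aᴴ, hunitary, Matrix.one_mul]
  have key : ∀ i : Fin n, (starRingEnd ℂ) (ap i i) * am i i = 1 := by
    intro i
    have h1 := congrFun (congrFun hmat i) i
    rw [Matrix.mul_apply, Matrix.mul_apply] at h1
    simp only [Matrix.conjTranspose_apply] at h1
    rw [Finset.sum_eq_single i
        (fun b _ hb => by
          rcases lt_or_gt_of_ne hb with h | h
          · rw [ham b i h, mul_zero]
          · rw [hap b i h, star_zero, zero_mul])
        (fun h => absurd (Finset.mem_univ i) h),
      Finset.sum_eq_single i
        (fun b _ hb => by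
          rcases lt_or_gt_of_ne hb with h | h
          · rw [hvp b i h, star_zero, zero_mul]
          · rw [hvm b i h, mul_zero])
        (fun h => absurd (Finset.mem_univ i) h)] at h1
    simp only [starRingEnd_apply]
    rw [h1, hvp1, hvm1]
    simp
  have hamne : ∀ i : Fin n, am i i ≠ 0 := fun i h => by
    have := key i; rw [h, mul_zero] at this; exact one_ne_zero this.symm
  have hdiag : ∀ i : Fin n, ap i i = ((starRingEnd ℂ) (am i i))⁻¹ := by
    intro i
    have h := key i
    have h2 : ap i i * (starRingEnd ℂ) (am i i) = 1 := by
      have := congrArg (starRingEnd ℂ) h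
      simpa using this
    exact eq_inv_of_mul_eq_one_right (by linear_combination h2)
  constructor
  · have hinv : (Matrix.diagonal fun i => am i i)⁻¹ =
        Matrix.diagonal (fun i => (am i i)⁻¹) := by
      apply Matrix.inv_eq_right_inv
      rw [Matrix.diagonal_mul_diagonal]
      have : (fun i => am i i * (am i i)⁻¹) = fun _ : Fin n => (1 : ℂ) := by
        funext i; exact mul_inv_cancel₀ (hamne i)
      rw [this, Matrix.diagonal_one]
    rw [hinv, Matrix.diagonal_conjTranspose]
    have heq : (fun i => ap i i) = star fun i : Fin n => (am i i)⁻¹ := by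
      funext i
      rw [Pi.star_apply, hdiag i, starRingEnd_apply, star_inv₀]
    rw [heq]
  · -- minor computations
    have hdp : ∀ j : ℕ, dplus a j =
        ∏ i ∈ Finset.univ.filter (fun i : Fin n => (i : ℕ) < j), am i i := by
      intro j
      have h1 := sub_mul_sub (fun i : Fin n => (i : ℕ) < j) a vm
        (fun k i hi hk => hvm k i (by
          rw [Fin.lt_def]; omega))
      rw [hamva] at h1
      have h2 := congrArg Matrix.det h1
      rw [det_sub_lower (fun i : Fin n => (i : ℕ) < j) am (fun i k h => ham i k h),
        Matrix.det_mul, det_sub_upper (fun i : Fin n => (i : ℕ) < j) vm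
          (fun i k h => hvm i k h)] at h2
      have h3 : ∏ i ∈ Finset.univ.filter (fun i : Fin n => (i : ℕ) < j), vm i i = 1 := by
        apply Finset.prod_eq_one; intro i _; exact hvm1 i
      rw [h3, mul_one] at h2
      exact h2.symm
    have hdm : ∀ j : ℕ, dminus a j =
        ∏ i ∈ Finset.univ.filter (fun i : Fin n => j ≤ (i : ℕ) + 1), ap i i := by
      intro j
      have h1 := sub_mul_sub (fun i : Fin n => j ≤ (i : ℕ) + 1) a vp
        (fun k i hi hk => hvp k i (by
          rw [Fin.lt_def]; omega))
      rw [hapva] at h1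
      have h2 := congrArg Matrix.det h1
      rw [det_sub_upper (fun i : Fin n => j ≤ (i : ℕ) + 1) ap (fun i k h => hap i k h),
        Matrix.det_mul, det_sub_lower (fun i : Fin n => j ≤ (i : ℕ) + 1) vp
          (fun i k h => hvp i k h)] at h2
      have h3 : ∏ i ∈ Finset.univ.filter (fun i : Fin n => j ≤ (i : ℕ) + 1), vp i i = 1 := by
        apply Finset.prod_eq_one; intro i _; exact hvp1 i
      rw [h3, mul_one] at h2
      exact h2.symm
    -- |det a| = 1
    have hdeta : ‖a.det‖ = 1 := by
      have h := congrArg Matrix.det hunitary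
      rw [Matrix.det_mul, Matrix.det_conjTranspose, Matrix.det_one] at h
      have h2 := congrArg (‖·‖) h
      rw [norm_mul, ← starRingEnd_apply, Complex.norm_conj, norm_one] at h2
      rcases mul_self_eq_one_iff.mp h2 with h3 | h3
      · exact h3
      · exfalso
        have := norm_nonneg a.det
        linarith
    have hamabs : ∏ i : Fin n, ‖am i i‖ = 1 := by
      have hdetam : a.det = ∏ i : Fin n, am i i := by
        rw [← Matrix.det_of_lowerTriangular am (fun i j h => ham i j h),
          ← hamva, Matrix.det_mul, hvmdet, mul_one]
      rw [← Complex.norm_prod Finset.univ (fun i => am i i), ← hdetam]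
      exact hdeta
    intro j
    rw [hdp, hdm, norm_div, Complex.norm_prod, Complex.norm_prod]
    have hF2 : Finset.univ.filter (fun i : Fin n => (j : ℕ) + 2 ≤ (i : ℕ) + 1) =
        Finset.univ.filter (fun i : Fin n => ¬ ((i : ℕ) < (j : ℕ) + 1)) := by
      apply Finset.filter_congr; intro i _; simp
    rw [hF2]
    have h4 : ∀ i ∈ Finset.univ.filter (fun i : Fin n => ¬ ((i : ℕ) < (j : ℕ) + 1)),
        ‖ap i i‖ = ‖am i i‖⁻¹ := by
      intro i _
      rw [hdiag i, norm_inv, Complex.norm_conj]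
    rw [Finset.prod_congr rfl h4, Finset.prod_inv_distrib, div_eq_mul_inv, inv_inv]
    rw [Finset.prod_filter_mul_prod_filter_not Finset.univ
      (fun i : Fin n => (i : ℕ) < (j : ℕ) + 1) (fun i => ‖am i i‖)]
    exact hamabs
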